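/- Let p be an odd prime, α ≥ 1, n ∈ {±1}, t ∈ ℤ with t² - 4n = d·ℓ² (d a fundamental discriminant, ℓ > 0). If ord_p(t² - 4n) ≥ α, then the set of ξ ∈ ℤ_p with ξ² - tξ + n ≡ 0 mod p^α equals { t/2 + p^{⌈α/2⌉}·u : u ∈ ℤ_p }. -/

import Mathlib

/-- A fundamental discriminant. -/
def IsFundamentalDiscriminant (d : ℤ) : Prop :=
  (d % 4 = 1 ∧ Squarefree d ∧ d ≠ 1) ∨
    (d % 4 = 0 ∧ Squarefree (d / 4) ∧ (d / 4) % 4 ≠ 1)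

private lemma padic_valuation_sq {p : ℕ} [hp : Fact p.Prime] (x : ℤ_[p]) (α : ℕ) :
    (p : ℤ_[p]) ^ α ∣ x ^ 2 ↔ (p : ℤ_[p]) ^ ((α + 1) / 2) ∣ x := by
  by_cases hx : x = 0
  · simp [hx]
  have hx2 : x ^ 2 ≠ 0 := pow_ne_zero _ hx
  rw [← Ideal.mem_span_singleton, ← Ideal.mem_span_singleton,
    PadicInt.mem_span_pow_iff_le_valuation _ hx2,
    PadicInt.mem_span_pow_iff_le_valuation _ hx]
  have hval : (x ^ 2).valuation = 2 * x.valuation := by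
    exact PadicInt.valuation_pow x 2
  rw [hval]
  constructor <;> intro h <;> [skip; skip] <;> omega

theorem padic_roots_high_valuation (p : ℕ) [hp : Fact p.Prime] (hp2 : p ≠ 2)
    (α : ℕ) (hα : 1 ≤ α) (n t : ℤ) (hn : n = 1 ∨ n = -1)
    (d : ℤ) (ℓ : ℕ) (hℓ : 0 < ℓ) (hd : IsFundamentalDiscriminant d)
    (hdec : t ^ 2 - 4 * n = d * (ℓ : ℤ) ^ 2)
    (hval : (p : ℤ) ^ α ∣ (t ^ 2 - 4 * n)) :
    {ξ : ℤ_[p] | (p : ℤ_[p]) ^ α ∣ (ξ ^ 2 - (t : ℤ_[p]) * ξ + (n : ℤ_[p]))} =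
      {ξ : ℤ_[p] | ∃ u : ℤ_[p],
        2 * ξ = (t : ℤ_[p]) + 2 * (p : ℤ_[p]) ^ ((α + 1) / 2) * u} := by
  -- 2 (hence 4) is a unit in ℤ_[p]
  have h2 : IsUnit (2 : ℤ_[p]) := by
    rw [PadicInt.isUnit_iff]
    have hle : ‖(2 : ℤ_[p])‖ ≤ 1 := PadicInt.norm_le_one _
    have hnlt : ¬ ‖(2 : ℤ_[p])‖ < 1 := by
      have : ((2 : ℤ) : ℤ_[p]) = (2 : ℤ_[p]) := by push_cast; ring
      rw [← this, PadicInt.norm_int_lt_one_iff_dvd]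
      intro hdvd
      have h2' : p ∣ 2 := by exact_mod_cast hdvd
      exact hp2 ((Nat.prime_dvd_prime_iff_eq hp.out Nat.prime_two).mp h2')
    linarith [lt_or_eq_of_le hle]
  have h4 : IsUnit (4 : ℤ_[p]) := by
    have : (4 : ℤ_[p]) = 2 * 2 := by norm_num
    rw [this]; exact h2.mul h2
  have hD : (p : ℤ_[p]) ^ α ∣ ((t ^ 2 - 4 * n : ℤ) : ℤ_[p]) := by
    obtain ⟨c, hc⟩ := hval
    exact ⟨(c : ℤ_[p]), by rw [hc]; push_cast; ring⟩
  ext ξ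
  simp only [Set.mem_setOf_eq]
  have key : (4 : ℤ_[p]) * (ξ ^ 2 - (t : ℤ_[p]) * ξ + (n : ℤ_[p]))
      = (2 * ξ - (t : ℤ_[p])) ^ 2 - ((t ^ 2 - 4 * n : ℤ) : ℤ_[p]) := by push_cast; ring
  constructor
  · intro h
    have h4q : (p : ℤ_[p]) ^ α ∣ (2 * ξ - (t : ℤ_[p])) ^ 2 := by
      have : (p : ℤ_[p]) ^ α ∣ (2 * ξ - (t : ℤ_[p])) ^ 2 - ((t ^ 2 - 4 * n : ℤ) : ℤ_[p]) := by
        rw [← key]; exact Dvd.dvd.mul_left h 4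
      have := dvd_add this hD
      simpa using this
    obtain ⟨c, hc⟩ := (padic_valuation_sq _ α).mp h4q
    obtain ⟨v, hv⟩ := h2
    refine ⟨↑v⁻¹ * c, ?_⟩
    have : 2 * (↑v⁻¹ : ℤ_[p]) = 1 := by
      rw [← hv, ← Units.val_mul, mul_inv_cancel, Units.val_one]
    calc 2 * ξ = (t : ℤ_[p]) + (2 * ξ - (t : ℤ_[p])) := by ring
      _ = (t : ℤ_[p]) + (p : ℤ_[p]) ^ ((α + 1) / 2) * c := by rw [hc]
      _ = (t : ℤ_[p]) + (2 * ↑v⁻¹) * ((p : ℤ_[p]) ^ ((α + 1) / 2) * c) := by rw [this]; ring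
      _ = (t : ℤ_[p]) + 2 * (p : ℤ_[p]) ^ ((α + 1) / 2) * (↑v⁻¹ * c) := by ring
  · rintro ⟨u, hu⟩
    have hdvd : (p : ℤ_[p]) ^ ((α + 1) / 2) ∣ (2 * ξ - (t : ℤ_[p])) :=
      ⟨2 * u, by rw [hu]; ring⟩
    have hsq : (p : ℤ_[p]) ^ α ∣ (2 * ξ - (t : ℤ_[p])) ^ 2 :=
      (padic_valuation_sq _ α).mpr hdvd
    have h4q : (p : ℤ_[p]) ^ α ∣ (4 : ℤ_[p]) * (ξ ^ 2 - (t : ℤ_[p]) * ξ + (n : ℤ_[p])) := by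
      rw [key]; exact dvd_sub hsq hD
    exact (IsUnit.dvd_mul_left h4).mp h4q
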